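/- With ε_k, σ_y as above and ζ_x = inf{y ≥ 1 : σ_y ≥ x}, for all positive integers x and y: P(σ_y = x) = Σ_{z=0}^{x−1} (−u)^z · P(ζ_{x+1−z} = y+1). -/

import Mathlib

open MeasureTheory ProbabilityTheory

theorem hitting_time_renewal_identity
    (Ω : Type*) [MeasurableSpace Ω] (P : Measure Ω) [IsProbabilityMeasure P]
    (u : ℝ) (hu : u ∈ Set.Ioo (0 : ℝ) 1)
    (ε : ℕ → Ω → ℕ) (hmeas : ∀ k, Measurable (ε k))
    (hindep : iIndepFun ε P)
    (h1 : ∀ k, P {ω | ε k ω = 1} = ENNReal.ofReal (1 - u))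
    (h2 : ∀ k, P {ω | ε k ω = 2} = ENNReal.ofReal u)
    -- the random walk `σ_y = ε_1 + ⋯ + ε_y`
    (σ : ℕ → Ω → ℕ) (hσ : ∀ y ω, σ y ω = ∑ k ∈ Finset.range y, ε k ω)
    -- the first passage time `ζ_x = inf {y ≥ 1 : σ_y ≥ x}`
    (ζ : ℕ → Ω → ℕ) (hζ : ∀ x ω, ζ x ω = sInf {y | 1 ≤ y ∧ x ≤ σ y ω})
    (x y : ℕ) (hx : 1 ≤ x) (hy : 1 ≤ y) :
    (P {ω | σ y ω = x}).toReal
      = ∑ z ∈ Finset.range x, (-u) ^ z * (P {ω | ζ (x + 1 - z) ω = y + 1}).toReal := by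
  obtain ⟨hu0, hu1⟩ := hu
  -- the good set where all steps are 1 or 2
  set G : Set Ω := ⋂ k, {ω | ε k ω = 1 ∨ ε k ω = 2} with hGdef
  have hGmem : ∀ ω, ω ∈ G ↔ ∀ k, ε k ω = 1 ∨ ε k ω = 2 := fun ω => Set.mem_iInter
  have hGc : P Gᶜ = 0 := by
    rw [hGdef, Set.compl_iInter]
    refine measure_iUnion_null fun k => ?_
    have hdis : Disjoint {ω | ε k ω = 1} {ω | ε k ω = 2} := by
      rw [Set.disjoint_left]; intro ω ha hb
      simp only [Set.mem_setOf_eq] at ha hb; omega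
    have hm2 : MeasurableSet {ω | ε k ω = 2} := hmeas k (measurableSet_singleton 2)
    have hm1 : MeasurableSet {ω | ε k ω = 1} := hmeas k (measurableSet_singleton 1)
    have hfull : P {ω | ε k ω = 1 ∨ ε k ω = 2} = 1 := by
      have hU : {ω | ε k ω = 1 ∨ ε k ω = 2} = {ω | ε k ω = 1} ∪ {ω | ε k ω = 2} := rfl
      rw [hU, measure_union hdis hm2, h1 k, h2 k,
        ← ENNReal.ofReal_add (by linarith) hu0.le]
      norm_num
    have hmU : MeasurableSet {ω | ε k ω = 1 ∨ ε k ω = 2} := by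
      have hU : {ω | ε k ω = 1 ∨ ε k ω = 2} = {ω | ε k ω = 1} ∪ {ω | ε k ω = 2} := rfl
      rw [hU]; exact hm1.union hm2
    rw [measure_compl hmU (measure_ne_top _ _), hfull, measure_univ, tsub_self]
  have hGae : ∀ᵐ ω ∂P, ω ∈ G := by
    rw [MeasureTheory.ae_iff]
    convert hGc using 2
    rfl
  -- basic pointwise facts
  have hmono : ∀ ω, ∀ a b : ℕ, a ≤ b → σ a ω ≤ σ b ω := by
    intro ω a b hab
    rw [hσ, hσ]
    exact Finset.sum_le_sum_of_subset (Finset.range_subset_range.2 hab)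
  have hlow : ∀ ω, ω ∈ G → ∀ n : ℕ, n ≤ σ n ω := by
    intro ω hω n
    rw [hσ]
    calc n = ∑ _k ∈ Finset.range n, 1 := by simp
      _ ≤ ∑ k ∈ Finset.range n, ε k ω := by
          refine Finset.sum_le_sum fun k _ => ?_
          rcases (hGmem ω).1 hω k with h | h <;> omega
  have hstep : ∀ ω, ∀ n : ℕ, σ (n + 1) ω = σ n ω + ε n ω := by
    intro ω n; rw [hσ, hσ, Finset.sum_range_succ]
  -- pointwise characterization of the hitting event on G
  have hpoint : ∀ ω, ω ∈ G → ∀ x' : ℕ, 1 ≤ x' →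
      (ζ (x' + 1) ω = y + 1 ↔ (σ y ω = x' ∨ (σ y ω = x' - 1 ∧ ε y ω = 2))) := by
    intro ω hω x' hx'
    have hne : ({z | 1 ≤ z ∧ x' + 1 ≤ σ z ω}).Nonempty :=
      ⟨x' + 1, ⟨by omega, hlow ω hω (x' + 1)⟩⟩
    have hchar : ζ (x' + 1) ω = y + 1 ↔ (σ y ω ≤ x' ∧ x' + 1 ≤ σ (y + 1) ω) := by
      rw [hζ]
      constructor
      · intro h
        have hmem : y + 1 ∈ {z | 1 ≤ z ∧ x' + 1 ≤ σ z ω} := h ▸ Nat.sInf_mem hne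
        have hyn : ¬ (x' + 1 ≤ σ y ω) := by
          intro hyS
          have : sInf {z | 1 ≤ z ∧ x' + 1 ≤ σ z ω} ≤ y := Nat.sInf_le ⟨hy, hyS⟩
          omega
        exact ⟨by omega, hmem.2⟩
      · rintro ⟨hle, hge⟩
        have hmem : y + 1 ∈ {z | 1 ≤ z ∧ x' + 1 ≤ σ z ω} := ⟨by omega, hge⟩
        refine le_antisymm (Nat.sInf_le hmem) ?_
        have hlb : ∀ z ∈ {z | 1 ≤ z ∧ x' + 1 ≤ σ z ω}, y + 1 ≤ z := by
          intro z hz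
          by_contra hzy
          have hz1 : σ z ω ≤ σ y ω := hmono ω z y (by omega)
          have := hz.2
          omega
        exact hlb _ (Nat.sInf_mem hne)
    rw [hchar, hstep ω y]
    rcases (hGmem ω).1 hω y with h | h <;> constructor <;> intro hh <;> omega
  -- measurability of the walk events
  have hAmeas : ∀ n : ℕ, MeasurableSet {ω | σ y ω = n} := by
    intro n
    have : {ω | σ y ω = n} = (fun ω => ∑ k ∈ Finset.range y, ε k ω) ⁻¹' {n} := by
      ext ω; simp [hσ]
    rw [this]
    exact (Finset.measurable_sum _ fun k _ => hmeas k) (measurableSet_singleton n)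
  -- independence of σ_y and ε_y
  have hindepSum : IndepFun (fun ω => ∑ k ∈ Finset.range y, ε k ω) (ε y) P := by
    have h := hindep.indepFun_sum_range_succ hmeas y
    have : (∑ j ∈ Finset.range y, ε j) = fun ω => ∑ k ∈ Finset.range y, ε k ω := by
      funext ω; simp
    rwa [this] at h
  have hBmul : ∀ n : ℕ, P ({ω | σ y ω = n} ∩ {ω | ε y ω = 2})
      = P {ω | σ y ω = n} * ENNReal.ofReal u := by
    intro n
    have hpre : {ω | σ y ω = n} = (fun ω => ∑ k ∈ Finset.range y, ε k ω) ⁻¹' {n} := by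
      ext ω; simp [hσ]
    have hpre2 : {ω | ε y ω = 2} = ε y ⁻¹' {2} := rfl
    rw [hpre, hpre2,
      hindepSum.measure_inter_preimage_eq_mul _ _ (measurableSet_singleton n)
        (measurableSet_singleton 2)]
    rw [← hpre2, h2 y]
  -- the key recursion, at the level of measures
  have hkey : ∀ x' : ℕ, 1 ≤ x' → P {ω | ζ (x' + 1) ω = y + 1}
      = P {ω | σ y ω = x'} + P {ω | σ y ω = x' - 1} * ENNReal.ofReal u := by
    intro x' hx'
    set A : Set Ω := {ω | σ y ω = x'} with hA
    set B : Set Ω := {ω | σ y ω = x' - 1} ∩ {ω | ε y ω = 2} with hB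
    have hae : {ω | ζ (x' + 1) ω = y + 1} =ᵐ[P] ((A ∪ B : Set Ω) : Ω → Prop) := by
      rw [Filter.eventuallyEq_set]
      filter_upwards [hGae] with ω hω
      simp only [hA, hB, Set.mem_union, Set.mem_inter_iff, Set.mem_setOf_eq]
      exact hpoint ω hω x' hx'
    have hdisj : Disjoint A B := by
      rw [hA, hB, Set.disjoint_left]
      rintro ω ha ⟨hb, -⟩
      simp only [Set.mem_setOf_eq] at ha hb
      omega
    have hBm : MeasurableSet B :=
      (hAmeas (x' - 1)).inter (hmeas y (measurableSet_singleton 2))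
    rw [measure_congr hae, measure_union hdisj hBm, hA, hB, hBmul (x' - 1)]
  -- the zero-probability base case
  have h0 : P {ω | σ y ω = 0} = 0 := by
    refine measure_mono_null ?_ hGc
    intro ω hω
    simp only [Set.mem_setOf_eq] at hω
    intro hG
    have := hlow ω hG y
    omega
  -- pass to real numbers
  have hrec : ∀ x' : ℕ, 1 ≤ x' → (P {ω | σ y ω = x'}).toReal
      = (P {ω | ζ (x' + 1) ω = y + 1}).toReal - u * (P {ω | σ y ω = x' - 1}).toReal := by
    intro x' hx'
    rw [hkey x' hx', ENNReal.toReal_add (measure_ne_top _ _)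
      (ENNReal.mul_ne_top (measure_ne_top _ _) ENNReal.ofReal_ne_top),
      ENNReal.toReal_mul, ENNReal.toReal_ofReal hu0.le]
    ring
  -- main induction
  induction x, hx using Nat.le_induction with
  | base =>
      rw [hrec 1 le_rfl]
      simp [h0]
  | succ n hn ih =>
      rw [hrec (n + 1) (by omega), Nat.add_sub_cancel, ih, Finset.sum_range_succ']
      have hidx : ∀ z : ℕ, n + 1 + 1 - (z + 1) = n + 1 - z := fun z => by omega
      simp only [hidx, pow_zero, one_mul, Nat.sub_zero]
      have hS : (∑ z ∈ Finset.range n,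
            (-u) ^ (z + 1) * (P {ω | ζ (n + 1 - z) ω = y + 1}).toReal)
          = -u * ∑ z ∈ Finset.range n,
            (-u) ^ z * (P {ω | ζ (n + 1 - z) ω = y + 1}).toReal := by
        rw [Finset.mul_sum]
        exact Finset.sum_congr rfl fun z _ => by ring
      rw [hS]
      ring
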